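/- Let n, q be positive integers, let X be a real n × (q+1) matrix of rank q+1, let t_1,…,t_n ∈ (0,1), ζ_1,…,ζ_n > 0, and p ∈ (1,2). Define D^O = diag( t_i^{2−p}·ζ_i^{2−p} ) and D^R = diag( t_i·ζ_i^{2−p} ). Then for every nonzero vector x ∈ ℝ^{q+1}, one has xᵀ(XᵀD^R X)⁻¹x > xᵀ(XᵀD^O X)⁻¹x > 0. -/

import Mathlib

open Matrix Real

/-- Quadratic form of a sandwich `Xᵀ D X`. -/
private lemma quad_sandwich {m k : Type*} [Fintype m] [Fintype k]
    (X : Matrix m k ℝ) (D : Matrix m m ℝ) (x : k → ℝ) :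
    x ⬝ᵥ ((Xᵀ * D * X) *ᵥ x) = (X *ᵥ x) ⬝ᵥ (D *ᵥ (X *ᵥ x)) := by
  rw [← Matrix.mulVec_mulVec, ← Matrix.mulVec_mulVec,
    Matrix.dotProduct_mulVec x Xᵀ, Matrix.vecMul_transpose]

/-- Full column rank implies `mulVec` injective at 0. -/
private lemma mulVec_ne_zero_of_rank {m : ℕ} {k : ℕ}
    (X : Matrix (Fin m) (Fin k) ℝ) (hX : X.rank = k)
    {y : Fin k → ℝ} (hy : y ≠ 0) : X *ᵥ y ≠ 0 := by
  intro h
  apply hy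
  have hker : LinearMap.ker X.mulVecLin = ⊥ := by
    have := LinearMap.finrank_range_add_finrank_ker X.mulVecLin
    rw [show Module.finrank ℝ (LinearMap.range X.mulVecLin) = X.rank from rfl, hX] at this
    have h0 : Module.finrank ℝ (LinearMap.ker X.mulVecLin) = 0 := by
      have hfk : Module.finrank ℝ (Fin k → ℝ) = k := by simp
      omega
    exact Submodule.finrank_eq_zero.mp h0
  have : y ∈ LinearMap.ker X.mulVecLin := by
    simpa [Matrix.mulVecLin] using h
  rw [hker] at this
  simpa using this

/-- `Xᵀ (diagonal d) X` is positive definite when `d` is positive and `X`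
has full column rank. -/
private lemma posDef_sandwich {m k : ℕ}
    (X : Matrix (Fin m) (Fin k) ℝ) (hX : X.rank = k)
    (d : Fin m → ℝ) (hd : ∀ i, 0 < d i) :
    (Xᵀ * Matrix.diagonal d * X).PosDef := by
  have hD : (Matrix.diagonal d).PosDef := Matrix.PosDef.diagonal hd
  refine posDef_iff_dotProduct_mulVec.mpr ⟨?_, ?_⟩
  · have : (Xᵀ * Matrix.diagonal d * X)ᵀ = Xᵀ * Matrix.diagonal d * X := by
      simp [Matrix.transpose_mul, Matrix.diagonal_transpose, Matrix.mul_assoc]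
    simpa [Matrix.IsHermitian] using this
  · intro x hx
    have hXx : X *ᵥ x ≠ 0 := mulVec_ne_zero_of_rank X hX hx
    have := hD.dotProduct_mulVec_pos (x := X *ᵥ x) hXx
    simpa [quad_sandwich] using this

/-- Key abstract lemma: strict antitonicity of the inverse quadratic form. -/
private lemma inv_quad_lt {k : Type*} [Fintype k] [DecidableEq k]
    {A B : Matrix k k ℝ} (hA : A.PosDef) (hB : B.PosDef)
    (hlt : ∀ y : k → ℝ, y ≠ 0 → y ⬝ᵥ (B *ᵥ y) < y ⬝ᵥ (A *ᵥ y))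
    {x : k → ℝ} (hx : x ≠ 0) :
    x ⬝ᵥ (A⁻¹ *ᵥ x) < x ⬝ᵥ (B⁻¹ *ᵥ x) := by
  have hAdet : IsUnit A.det := isUnit_iff_ne_zero.mpr (ne_of_gt hA.det_pos)
  have hBdet : IsUnit B.det := isUnit_iff_ne_zero.mpr (ne_of_gt hB.det_pos)
  set u : k → ℝ := A⁻¹ *ᵥ x with hu
  set v : k → ℝ := B⁻¹ *ᵥ x with hv
  have hAu : A *ᵥ u = x := by
    rw [hu, Matrix.mulVec_mulVec, Matrix.mul_nonsing_inv A hAdet, Matrix.one_mulVec]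
  have hBv : B *ᵥ v = x := by
    rw [hv, Matrix.mulVec_mulVec, Matrix.mul_nonsing_inv B hBdet, Matrix.one_mulVec]
  have hune : u ≠ 0 := by
    intro h
    apply hx
    rw [← hAu, h, Matrix.mulVec_zero]
  -- B symmetry facts
  have hBsymm : Bᵀ = B := hB.isHermitian
  have huBv : u ⬝ᵥ (B *ᵥ v) = u ⬝ᵥ x := by rw [hBv]
  have hvBu : v ⬝ᵥ (B *ᵥ u) = u ⬝ᵥ x := by
    rw [Matrix.dotProduct_mulVec, ← Matrix.mulVec_transpose, hBsymm, hBv, dotProduct_comm]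
  have hvBv : v ⬝ᵥ (B *ᵥ v) = v ⬝ᵥ x := by rw [hBv]
  -- positive semidefiniteness of B at u - v
  have hsq : 0 ≤ (u - v) ⬝ᵥ (B *ᵥ (u - v)) := by
    have := hB.posSemidef.dotProduct_mulVec_nonneg (u - v)
    simpa using this
  have hexp : (u - v) ⬝ᵥ (B *ᵥ (u - v))
      = u ⬝ᵥ (B *ᵥ u) - 2 * (u ⬝ᵥ x) + v ⬝ᵥ x := by
    have e1 : (u - v) ⬝ᵥ (B *ᵥ (u - v))
        = u ⬝ᵥ (B *ᵥ u) - u ⬝ᵥ (B *ᵥ v) - (v ⬝ᵥ (B *ᵥ u) - v ⬝ᵥ (B *ᵥ v)) := by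
      rw [Matrix.mulVec_sub, sub_dotProduct, dotProduct_sub,
        dotProduct_sub]
    rw [e1, huBv, hvBu, hvBv]
    ring
  have huAu : u ⬝ᵥ (A *ᵥ u) = u ⬝ᵥ x := by rw [hAu]
  have hstrict : u ⬝ᵥ (B *ᵥ u) < u ⬝ᵥ x := by
    have := hlt u hune
    rwa [huAu] at this
  have hxv : x ⬝ᵥ v = v ⬝ᵥ x := dotProduct_comm _ _
  have hxu : x ⬝ᵥ u = u ⬝ᵥ x := dotProduct_comm _ _
  -- combine
  have : u ⬝ᵥ x < v ⬝ᵥ x := by nlinarith [hsq, hexp, hstrict]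
  rw [← hu, ← hv] at *
  calc x ⬝ᵥ u = u ⬝ᵥ x := hxu
    _ < v ⬝ᵥ x := this
    _ = x ⬝ᵥ v := hxv.symm

/-- Strict comparison of the quadratic forms of the inverse Fisher
information cores: for every nonzero `x`,
`xᵀ(XᵀD^R X)⁻¹x > xᵀ(XᵀD^O X)⁻¹x > 0`. -/
theorem quadratic_form_inv_comparison
    (n q : ℕ) (hn : 0 < n) (hq : 0 < q)
    (X : Matrix (Fin n) (Fin (q + 1)) ℝ) (hX : X.rank = q + 1)
    (t ζ : Fin n → ℝ)
    (ht0 : ∀ i, 0 < t i) (ht1 : ∀ i, t i < 1)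
    (hζ : ∀ i, 0 < ζ i)
    (p : ℝ) (hp1 : 1 < p) (hp2 : p < 2)
    (DO DR : Matrix (Fin n) (Fin n) ℝ)
    (hDO : DO = Matrix.diagonal (fun i => t i ^ (2 - p) * ζ i ^ (2 - p)))
    (hDR : DR = Matrix.diagonal (fun i => t i * ζ i ^ (2 - p))) :
    ∀ x : Fin (q + 1) → ℝ, x ≠ 0 →
      x ⬝ᵥ ((Xᵀ * DR * X)⁻¹ *ᵥ x) > x ⬝ᵥ ((Xᵀ * DO * X)⁻¹ *ᵥ x) ∧
      x ⬝ᵥ ((Xᵀ * DO * X)⁻¹ *ᵥ x) > 0 := by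
  -- positivity of the diagonal entries
  have hdO : ∀ i, 0 < t i ^ (2 - p) * ζ i ^ (2 - p) := fun i =>
    mul_pos (Real.rpow_pos_of_pos (ht0 i) _) (Real.rpow_pos_of_pos (hζ i) _)
  have hdR : ∀ i, 0 < t i * ζ i ^ (2 - p) := fun i =>
    mul_pos (ht0 i) (Real.rpow_pos_of_pos (hζ i) _)
  have hdiff : ∀ i, 0 < t i ^ (2 - p) * ζ i ^ (2 - p) - t i * ζ i ^ (2 - p) := by
    intro i
    have ht : t i < t i ^ (2 - p) := by
      have := Real.rpow_lt_rpow_of_exponent_gt (ht0 i) (ht1 i)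
        (show (2 : ℝ) - p < 1 by linarith)
      rwa [Real.rpow_one] at this
    have hz : 0 < ζ i ^ (2 - p) := Real.rpow_pos_of_pos (hζ i) _
    nlinarith
  have hA : (Xᵀ * DO * X).PosDef := by
    rw [hDO]; exact posDef_sandwich X hX _ hdO
  have hB : (Xᵀ * DR * X).PosDef := by
    rw [hDR]; exact posDef_sandwich X hX _ hdR
  have hlt : ∀ y : Fin (q + 1) → ℝ, y ≠ 0 →
      y ⬝ᵥ ((Xᵀ * DR * X) *ᵥ y) < y ⬝ᵥ ((Xᵀ * DO * X) *ᵥ y) := by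
    intro y hy
    have hXy : X *ᵥ y ≠ 0 := mulVec_ne_zero_of_rank X hX hy
    have hDdiff : (Matrix.diagonal
        (fun i => t i ^ (2 - p) * ζ i ^ (2 - p) - t i * ζ i ^ (2 - p))).PosDef :=
      Matrix.PosDef.diagonal hdiff
    have hpos := hDdiff.dotProduct_mulVec_pos (x := X *ᵥ y) hXy
    have hsub : DO - DR = Matrix.diagonal
        (fun i => t i ^ (2 - p) * ζ i ^ (2 - p) - t i * ζ i ^ (2 - p)) := by
      rw [hDO, hDR, Matrix.diagonal_sub]
    have key : y ⬝ᵥ ((Xᵀ * DO * X) *ᵥ y) - y ⬝ᵥ ((Xᵀ * DR * X) *ᵥ y)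
        = (X *ᵥ y) ⬝ᵥ ((DO - DR) *ᵥ (X *ᵥ y)) := by
      rw [quad_sandwich, quad_sandwich, Matrix.sub_mulVec, dotProduct_sub]
    have : 0 < y ⬝ᵥ ((Xᵀ * DO * X) *ᵥ y) - y ⬝ᵥ ((Xᵀ * DR * X) *ᵥ y) := by
      rw [key, hsub]
      simpa using hpos
    linarith
  intro x hx
  refine ⟨inv_quad_lt hA hB hlt hx, ?_⟩
  have := hA.inv.dotProduct_mulVec_pos (x := x) hx
  simpa using this
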